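/- Define the quiver Q with vertices {A, B, C, a, b, c} and arrows A→a, a→A, B→b, b→B, C→c, c→C, a→b, a→c, b→a, b→c, c→a, c→b. Let a_n be the number of walks in Q of n arrows starting at vertex a. Then a_n = P_{n+1} + P_n for all n ≥ 0, where (P_n) are the Pell numbers defined by P_0 = 0, P_1 = 1, P_{n+1} = 2P_n + P_{n−1}. -/

import Mathlib

/-- Adjacency matrix of the quiver `Q` on ordered vertices `(A, B, C, a, b, c)`
with arrows `A→a, a→A, B→b, b→B, C→c, c→C, a→b, a→c, b→a, b→c, c→a, c→b`. -/
def M : Matrix (Fin 6) (Fin 6) ℕ :=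
  !![0,0,0,1,0,0;
     0,0,0,0,1,0;
     0,0,0,0,0,1;
     1,0,0,0,1,1;
     0,1,0,1,0,1;
     0,0,1,1,1,0]

/-- Total number of walks of `n` arrows in `Q` (from any vertex to any vertex). -/
def t (n : ℕ) : ℕ := ∑ i : Fin 6, ∑ j : Fin 6, (M ^ n) i j

/-- Number of walks of `n` arrows in `Q` starting at vertex `a` (index 3). -/
def aWalks (n : ℕ) : ℕ := ∑ j : Fin 6, (M ^ n) 3 j

/-- Row-sum pair `(x_n, y_n)`: `x_n` is the common row sum of `M^n` on rows
`A,B,C` and `y_n` on rows `a,b,c`. -/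
def g : ℕ → ℕ × ℕ
  | 0 => (1, 1)
  | n + 1 => ((g n).2, (g n).1 + 2 * (g n).2)

lemma cons_val_five {α : Type*} (a0 a1 a2 a3 a4 a5 : α) :
    ![a0, a1, a2, a3, a4, a5] 5 = a5 := rfl

lemma mulVec_step (x y : ℕ) :
    M.mulVec ![x, x, x, y, y, y] = ![y, y, y, x + 2*y, x + 2*y, x + 2*y] := by
  simp only [M, Matrix.cons_mulVec, Matrix.cons_dotProduct, Matrix.empty_mulVec,
    zero_dotProduct, Matrix.dotProduct_of_isEmpty]
  norm_num
  ring

lemma key : ∀ n, (M ^ n).mulVec (fun _ => 1) =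
    ![(g n).1, (g n).1, (g n).1, (g n).2, (g n).2, (g n).2] := by
  intro n
  induction n with
  | zero =>
    rw [pow_zero, Matrix.one_mulVec]
    funext i
    fin_cases i <;> rfl
  | succ n ih =>
    rw [pow_succ', ← Matrix.mulVec_mulVec, ih, mulVec_step]
    rfl

lemma aWalks_eq_g : ∀ n, aWalks n = (g n).2 := by
  intro n
  have h := congrFun (key n) 3
  simpa [aWalks, Matrix.mulVec, dotProduct] using h

theorem aWalks_eq_pell (P : ℕ → ℕ) (hP0 : P 0 = 0) (hP1 : P 1 = 1)
    (hP : ∀ n, P (n + 2) = 2 * P (n + 1) + P n) :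
    ∀ n, aWalks n = P (n + 1) + P n := by
  have main : ∀ n, (g (n+1)).1 = P (n+1) + P n ∧ (g (n+1)).2 = P (n+2) + P (n+1) := by
    intro n
    induction n with
    | zero =>
      constructor
      · simp [g, hP0, hP1]
      · simp [g, hP 0, hP0, hP1]
    | succ n ih =>
      obtain ⟨h1, h2⟩ := ih
      constructor
      · show (g (n+1)).2 = _
        exact h2
      · show (g (n+1)).1 + 2 * (g (n+1)).2 = _
        rw [h1, h2, hP (n+1), hP n]
        ring
  intro n
  rw [aWalks_eq_g]
  cases n with
  | zero => simp [g, hP0, hP1]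
  | succ n => exact (main n).2
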